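/- arXiv:1405.6958 — 4 statements merged into one kernel-verified Lean document; each statement's English description precedes it below -/
import Mathlib

section
/- Let p ≥ 2 and M ≥ 0 be integers, set L = p^(M+1), and let (a_n) be a mod-p Prouhet–Thue–Morse sequence of real numbers. Then for every m with 0 ≤ m ≤ M, Σ_{n=0}^{L-1} n^m · a_n = P_m · (a_0 + a_1 + ... + a_{p-1}), where P_m = Σ_{n ∈ S_0} n^m is the m-th Prouhet sum and S_0 = { n ∈ {0, ..., L-1} : v_p(n) = 0 }. -/
/-- Mod-p sum-of-digits: sum of the base-p digits of n, reduced modulo p. -/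
def vp (p n : ℕ) : ℕ := (Nat.digits p n).sum % p

namespace PTMaux

open Finset

/-- The digit sum viewed in `ZMod p`. -/
def Sd (p n : ℕ) : ZMod p := ((Nat.digits p n).sum : ZMod p)

lemma vp_eq_val (p : ℕ) [NeZero p] (n : ℕ) : vp p n = (Sd p n).val := by
  simp only [vp, Sd, ZMod.val_natCast]

lemma Sd_zero (p : ℕ) : Sd p 0 = 0 := by simp [Sd]

lemma Sd_mul_add {p : ℕ} (hp : 2 ≤ p) (q r : ℕ) (hr : r < p) :
    Sd p (q * p + r) = Sd p q + (r : ZMod p) := by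
  rcases Nat.eq_zero_or_pos (q * p + r) with h | h
  · have hq : q = 0 := by
      rcases Nat.add_eq_zero.mp h with ⟨h1, _⟩
      rcases Nat.mul_eq_zero.mp h1 with h2 | h2
      · exact h2
      · omega
    have hr0 : r = 0 := by omega
    simp [hq, hr0, Sd]
  · have h1 : (q * p + r) % p = r := by
      rw [add_comm, Nat.add_mul_mod_self_right, Nat.mod_eq_of_lt hr]
    have h2 : (q * p + r) / p = q := by
      rw [mul_comm, Nat.mul_add_div (by omega), Nat.div_eq_of_lt hr, add_zero]
    rw [Sd, Nat.digits_def' (by omega : 1 < p) h, h1, h2]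
    simp [Sd]
    push_cast
    ring

lemma Sd_of_lt {p : ℕ} (hp : 2 ≤ p) (r : ℕ) (hr : r < p) : Sd p r = (r : ZMod p) := by
  have := Sd_mul_add hp 0 r hr
  simpa [Sd_zero] using this

lemma sum_range_mul (f : ℕ → ℝ) (a b : ℕ) :
    ∑ n ∈ Finset.range (a * b), f n
      = ∑ q ∈ Finset.range a, ∑ r ∈ Finset.range b, f (q * b + r) := by
  induction a with
  | zero => simp
  | succ a ih =>
    rw [Finset.sum_range_succ, ← ih, Nat.succ_mul, Finset.sum_range_add]

lemma sum_range_zmod (p : ℕ) [NeZero p] (g : ZMod p → ℝ) :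
    ∑ r ∈ Finset.range p, g ((r : ZMod p)) = ∑ x : ZMod p, g x :=
  Finset.sum_nbij' (i := fun r => (r : ZMod p)) (j := fun x => x.val)
    (fun _ _ => Finset.mem_univ _)
    (fun x _ => Finset.mem_range.mpr x.val_lt)
    (fun a ha => by simp [ZMod.val_natCast, Nat.mod_eq_of_lt (Finset.mem_range.mp ha)])
    (fun x _ => by simp [ZMod.natCast_val])
    (fun _ _ => rfl)

/-- The class sum. -/
noncomputable def F (p L m : ℕ) (c : ZMod p) : ℝ :=
  ∑ n ∈ Finset.range L, if Sd p n = c then (n : ℝ) ^ m else 0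

lemma expand {p : ℕ} (hp : 2 ≤ p) (L m : ℕ) (c : ZMod p) :
    F p (L * p) m c
      = ∑ k ∈ Finset.range (m + 1), (m.choose k : ℝ) * (p : ℝ) ^ k *
          ∑ r ∈ Finset.range p, (r : ℝ) ^ (m - k) * F p L k (c - (r : ZMod p)) := by
  rw [F, sum_range_mul]
  have step1 : ∀ q : ℕ, ∀ r ∈ Finset.range p,
      (if Sd p (q * p + r) = c then ((q * p + r : ℕ) : ℝ) ^ m else 0)
        = ∑ k ∈ Finset.range (m + 1),
            (m.choose k : ℝ) * (p : ℝ) ^ k *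
              ((r : ℝ) ^ (m - k) * (if Sd p q = c - (r : ZMod p) then (q : ℝ) ^ k else 0)) := by
    intro q r hr
    rw [Sd_mul_add hp q r (Finset.mem_range.mp hr)]
    by_cases h : Sd p q = c - (r : ZMod p)
    · rw [if_pos (by rw [h]; ring)]
      push_cast
      rw [add_pow]
      refine Finset.sum_congr rfl fun k _ => ?_
      rw [if_pos h]
      ring
    · rw [if_neg (fun hc => h (by rw [eq_sub_iff_add_eq]; exact hc))]
      refine (Finset.sum_eq_zero fun k _ => ?_).symm
      rw [if_neg h]
      ring
  calc ∑ q ∈ Finset.range L, ∑ r ∈ Finset.range p,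
        (if Sd p (q * p + r) = c then ((q * p + r : ℕ) : ℝ) ^ m else 0)
      = ∑ q ∈ Finset.range L, ∑ r ∈ Finset.range p, ∑ k ∈ Finset.range (m + 1),
          (m.choose k : ℝ) * (p : ℝ) ^ k *
            ((r : ℝ) ^ (m - k) * (if Sd p q = c - (r : ZMod p) then (q : ℝ) ^ k else 0)) := by
        exact Finset.sum_congr rfl fun q _ => Finset.sum_congr rfl (step1 q)
    _ = ∑ k ∈ Finset.range (m + 1), ∑ r ∈ Finset.range p, ∑ q ∈ Finset.range L,
          (m.choose k : ℝ) * (p : ℝ) ^ k *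
            ((r : ℝ) ^ (m - k) * (if Sd p q = c - (r : ZMod p) then (q : ℝ) ^ k else 0)) := by
        calc ∑ q ∈ Finset.range L, ∑ r ∈ Finset.range p, ∑ k ∈ Finset.range (m + 1),
              (m.choose k : ℝ) * (p : ℝ) ^ k *
                ((r : ℝ) ^ (m - k) * (if Sd p q = c - (r : ZMod p) then (q : ℝ) ^ k else 0))
            = ∑ q ∈ Finset.range L, ∑ k ∈ Finset.range (m + 1), ∑ r ∈ Finset.range p,
              (m.choose k : ℝ) * (p : ℝ) ^ k *
                ((r : ℝ) ^ (m - k) * (if Sd p q = c - (r : ZMod p) then (q : ℝ) ^ k else 0)) :=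
              Finset.sum_congr rfl fun q _ => Finset.sum_comm
          _ = ∑ k ∈ Finset.range (m + 1), ∑ q ∈ Finset.range L, ∑ r ∈ Finset.range p,
              (m.choose k : ℝ) * (p : ℝ) ^ k *
                ((r : ℝ) ^ (m - k) * (if Sd p q = c - (r : ZMod p) then (q : ℝ) ^ k else 0)) :=
              Finset.sum_comm
          _ = ∑ k ∈ Finset.range (m + 1), ∑ r ∈ Finset.range p, ∑ q ∈ Finset.range L,
              (m.choose k : ℝ) * (p : ℝ) ^ k *
                ((r : ℝ) ^ (m - k) * (if Sd p q = c - (r : ZMod p) then (q : ℝ) ^ k else 0)) :=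
              Finset.sum_congr rfl fun k _ => Finset.sum_comm
    _ = ∑ k ∈ Finset.range (m + 1), (m.choose k : ℝ) * (p : ℝ) ^ k *
          ∑ r ∈ Finset.range p, (r : ℝ) ^ (m - k) * F p L k (c - (r : ZMod p)) := by
        refine Finset.sum_congr rfl fun k _ => ?_
        rw [Finset.mul_sum]
        refine Finset.sum_congr rfl fun r _ => ?_
        rw [F, Finset.mul_sum, Finset.mul_sum]

lemma key {p : ℕ} (hp : 2 ≤ p) (M : ℕ) :
    ∀ m ≤ M, ∀ c : ZMod p, F p (p ^ (M + 1)) m c = F p (p ^ (M + 1)) m 0 := by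
  haveI : NeZero p := ⟨by omega⟩
  induction M with
  | zero =>
    intro m hm c
    interval_cases m
    have hc : ∀ c : ZMod p, F p (p ^ 1) 0 c = 1 := by
      intro c
      rw [F]
      have : ∀ n ∈ Finset.range p, (if Sd p n = c then ((n : ℝ) ^ 0) else 0)
          = (fun x : ZMod p => if x = c then (1 : ℝ) else 0) ((n : ZMod p)) := by
        intro n hn
        rw [Sd_of_lt hp n (Finset.mem_range.mp hn)]
        simp
      rw [pow_one, Finset.sum_congr rfl this,
        sum_range_zmod p (fun x => if x = c then (1 : ℝ) else 0)]
      simp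
    rw [hc, hc]
  | succ M ih =>
    intro m hm c
    have hpow : p ^ (M + 1 + 1) = p ^ (M + 1) * p := by ring
    rw [hpow, expand hp, expand hp]
    refine Finset.sum_congr rfl fun k hk => ?_
    have hk' : k ≤ m := Nat.lt_succ_iff.mp (Finset.mem_range.mp hk)
    rcases Nat.lt_or_ge k (M + 1) with hkM | hkM
    · -- k ≤ M : use induction hypothesis
      have hFk : ∀ d : ZMod p, F p (p ^ (M + 1)) k d = F p (p ^ (M + 1)) k 0 :=
        ih k (by omega)
      congr 1
      refine Finset.sum_congr rfl fun r _ => ?_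
      rw [hFk (c - (r : ZMod p)), hFk (0 - (r : ZMod p))]
    · -- k = m = M + 1
      have hkm : k = m := by omega
      have hmk : m - k = 0 := by omega
      congr 1
      simp only [hmk, pow_zero, one_mul]
      have hsum : ∀ d : ZMod p,
          ∑ r ∈ Finset.range p, F p (p ^ (M + 1)) k (d - (r : ZMod p))
            = ∑ x : ZMod p, F p (p ^ (M + 1)) k x := by
        intro d
        rw [sum_range_zmod p (fun x => F p (p ^ (M + 1)) k (d - x))]
        exact Fintype.sum_equiv (Equiv.subLeft d) _ _ (fun x => rfl)
      rw [hsum, hsum]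

end PTMaux

/-- For a mod-p PTM sequence (a_n) and L = p^(M+1),
Σ_{n<L} n^m a_n = P_m (a_0 + ... + a_{p-1}) for 0 ≤ m ≤ M. -/
theorem sum_pow_mul_ptm (p M : ℕ) (hp : 2 ≤ p) (L : ℕ) (hL : L = p ^ (M + 1))
    (a : ℕ → ℝ) (ha : ∀ n, a n = a (vp p n))
    (m : ℕ) (hm : m ≤ M) :
    ∑ n ∈ Finset.range L, (n : ℝ) ^ m * a n
      = (∑ n ∈ (Finset.range L).filter (fun n => vp p n = 0), (n : ℝ) ^ m)
          * (∑ n ∈ Finset.range p, a n) := by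
  haveI : NeZero p := ⟨by omega⟩
  open PTMaux in
  -- relate filter sums to `F`
  have hfilter : ∀ j : ℕ, j < p →
      ∑ n ∈ (Finset.range L).filter (fun n => vp p n = j), (n : ℝ) ^ m
        = F p L m ((j : ZMod p)) := by
    intro j hj
    rw [F, Finset.sum_filter]
    refine Finset.sum_congr rfl fun n _ => ?_
    congr 1
    have : vp p n = j ↔ Sd p n = (j : ZMod p) := by
      rw [vp_eq_val]
      constructor
      · intro h; rw [← h, ZMod.natCast_val, ZMod.cast_id]
      · intro h; rw [h, ZMod.val_natCast, Nat.mod_eq_of_lt hj]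
    simp [this]
  have hvp_lt : ∀ n, vp p n < p := fun n => Nat.mod_lt _ (by omega)
  -- group by vp
  rw [← Finset.sum_fiberwise_of_maps_to (g := fun n => vp p n) (t := Finset.range p)
      (fun n _ => Finset.mem_range.mpr (hvp_lt n))]
  have hterm : ∀ j ∈ Finset.range p,
      ∑ n ∈ (Finset.range L).filter (fun n => vp p n = j), (n : ℝ) ^ m * a n
        = (∑ n ∈ (Finset.range L).filter (fun n => vp p n = 0), (n : ℝ) ^ m) * a j := by
    intro j hj
    have hj' := Finset.mem_range.mp hj
    have : ∀ n ∈ (Finset.range L).filter (fun n => vp p n = j),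
        (n : ℝ) ^ m * a n = (n : ℝ) ^ m * a j := by
      intro n hn
      have hvn : vp p n = j := (Finset.mem_filter.mp hn).2
      rw [ha n, hvn]
    rw [Finset.sum_congr rfl this, ← Finset.sum_mul]
    congr 1
    rw [hfilter j hj', hfilter 0 (by omega), hL, key hp M m hm]
    simp
  rw [Finset.sum_congr rfl hterm, ← Finset.mul_sum]
end

section
/- Let p ≥ 2 be an integer and let (a_n) be a mod-p Prouhet–Thue–Morse sequence of real numbers. With B_i = Σ_{n=0}^{p-1} w_i(n) · a_n, the decomposition a_n = (1/2^{p-1}) · Σ_{i=0}^{2^{p-1}-1} w_i(n) · B_i holds for every n ≥ 0. -/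
/-- The weight sequence w_i(n) = (-1)^{d^{(i)}_{p-1-v_p(n)}}, where d_k^{(i)} is the
k-th binary digit of i. -/
def w (p i n : ℕ) : ℝ := (-1 : ℝ) ^ (i / 2 ^ (p - 1 - vp p n) % 2)

lemma w_eq (p i n : ℕ) : w p i n = if i.testBit (p - 1 - vp p n) then -1 else 1 := by
  unfold w
  rcases Nat.mod_two_eq_zero_or_one (i / 2 ^ (p - 1 - vp p n)) with h | h <;>
    simp [h, Nat.testBit_eq_decide_div_mod_eq]

lemma orth {N k l : ℕ} (hk : k < N) (hl : l ≠ k) :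
    ∑ i ∈ Finset.range (2 ^ N),
      (if i.testBit k then (-1:ℝ) else 1) * (if i.testBit l then (-1:ℝ) else 1) = 0 := by
  have hmem : ∀ a : ℕ, a ∈ Finset.range (2 ^ N) → a ^^^ 2 ^ k ∈ Finset.range (2 ^ N) := by
    intro a ha
    rw [Finset.mem_range] at *
    exact Nat.xor_lt_two_pow ha (Nat.pow_lt_pow_right one_lt_two hk)
  have hadd : ∀ a : ℕ, a ∈ Finset.range (2 ^ N) →
      (if a.testBit k then (-1:ℝ) else 1) * (if a.testBit l then (-1:ℝ) else 1) +
      (if (a ^^^ 2 ^ k).testBit k then (-1:ℝ) else 1) *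
        (if (a ^^^ 2 ^ k).testBit l then (-1:ℝ) else 1) = 0 := by
    intro a _
    have h1 : (a ^^^ 2 ^ k).testBit k = ! a.testBit k := by
      simp [Nat.testBit_xor, Nat.testBit_two_pow_self]
    have h2 : (a ^^^ 2 ^ k).testBit l = a.testBit l := by
      simp [Nat.testBit_xor, Nat.testBit_two_pow_of_ne (by omega : k ≠ l)]
    rw [h1, h2]
    cases a.testBit k <;> cases a.testBit l <;> norm_num
  have hne : ∀ a : ℕ, a ∈ Finset.range (2 ^ N) →
      (if a.testBit k then (-1:ℝ) else 1) * (if a.testBit l then (-1:ℝ) else 1) ≠ 0 →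
      a ^^^ 2 ^ k ≠ a := by
    intro a _ _ h
    have := congrArg (fun x => x.testBit k) h
    simp [Nat.testBit_xor, Nat.testBit_two_pow_self] at this
  have hinv : ∀ a : ℕ, a ∈ Finset.range (2 ^ N) → a ^^^ 2 ^ k ^^^ 2 ^ k = a := by
    intro a _
    exact xor_cancel_right _ _
  exact Finset.sum_involution (fun a _ => a ^^^ 2 ^ k) hadd hne
    (fun a ha => hmem a ha) (fun a ha => hinv a ha)

lemma orth_full (N k l : ℕ) (hk : k ≤ N) (hl : l ≤ N) :
    ∑ i ∈ Finset.range (2 ^ N),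
      (if i.testBit k then (-1:ℝ) else 1) * (if i.testBit l then (-1:ℝ) else 1) =
      if k = l then (2:ℝ) ^ N else 0 := by
  by_cases h : k = l
  · subst h
    rw [if_pos rfl]
    have : ∀ i : ℕ,
        (if i.testBit k then (-1:ℝ) else 1) * (if i.testBit k then (-1:ℝ) else 1) = 1 := by
      intro i; cases i.testBit k <;> norm_num
    simp [this]
  · rw [if_neg h]
    rcases lt_or_eq_of_le hk with hk' | hk'
    · exact orth hk' (Ne.symm h)
    · have hll : l < N := by omega
      calc ∑ i ∈ Finset.range (2 ^ N),
            (if i.testBit k then (-1:ℝ) else 1) * (if i.testBit l then (-1:ℝ) else 1)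
          = ∑ i ∈ Finset.range (2 ^ N),
            (if i.testBit l then (-1:ℝ) else 1) * (if i.testBit k then (-1:ℝ) else 1) := by
            apply Finset.sum_congr rfl; intro i _; ring
        _ = 0 := orth hll (by omega)

lemma key (p n m : ℕ) (hp : 2 ≤ p) :
    ∑ i ∈ Finset.range (2 ^ (p - 1)), w p i n * w p i m =
      if p - 1 - vp p n = p - 1 - vp p m then (2 : ℝ) ^ (p - 1) else 0 := by
  simp only [w_eq]
  exact orth_full (p - 1) _ _ (Nat.sub_le _ _) (Nat.sub_le _ _)

lemma vp_lt (p n : ℕ) (hp : 2 ≤ p) : vp p n < p := Nat.mod_lt _ (by omega)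

lemma vp_small (p m : ℕ) (hp : 2 ≤ p) (hm : m < p) : vp p m = m := by
  unfold vp
  rcases Nat.eq_zero_or_pos m with rfl | h
  · simp
  · rw [Nat.digits_def' (by omega : 1 < p) h]
    simp [Nat.mod_eq_of_lt hm, Nat.div_eq_of_lt hm]

/-- Rademacher-transform decomposition of a mod-p PTM sequence:
a_n = (1/2^{p-1}) Σ_{i=0}^{2^{p-1}-1} w_i(n) B_i. -/
theorem ptm_decomposition (p : ℕ) (hp : 2 ≤ p)
    (a : ℕ → ℝ) (ha : ∀ n, a n = a (vp p n))
    (B : ℕ → ℝ) (hB : ∀ i, B i = ∑ n ∈ Finset.range p, w p i n * a n)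
    (n : ℕ) :
    a n = (1 / 2 ^ (p - 1)) * ∑ i ∈ Finset.range (2 ^ (p - 1)), w p i n * B i := by
  have hv : vp p n < p := vp_lt p n hp
  have hmain : ∑ i ∈ Finset.range (2 ^ (p - 1)), w p i n * B i = 2 ^ (p - 1) * a n := by
    calc ∑ i ∈ Finset.range (2 ^ (p - 1)), w p i n * B i
        = ∑ i ∈ Finset.range (2 ^ (p - 1)), ∑ m ∈ Finset.range p,
            (w p i n * w p i m) * a m := by
          apply Finset.sum_congr rfl; intro i _
          rw [hB, Finset.mul_sum]
          apply Finset.sum_congr rfl; intro m _; ring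
      _ = ∑ m ∈ Finset.range p, (∑ i ∈ Finset.range (2 ^ (p - 1)), w p i n * w p i m) * a m := by
          rw [Finset.sum_comm]
          simp [Finset.sum_mul]
      _ = ∑ m ∈ Finset.range p, (if m = vp p n then (2:ℝ) ^ (p - 1) * a m else 0) := by
          apply Finset.sum_congr rfl; intro m hm
          rw [Finset.mem_range] at hm
          rw [key p n m hp, vp_small p m hp hm]
          have : (p - 1 - vp p n = p - 1 - m) ↔ m = vp p n := by omega
          by_cases hmv : m = vp p n
          · rw [if_pos (this.mpr hmv), if_pos hmv]
          · rw [if_neg (fun hc => hmv (this.mp hc)), if_neg hmv, zero_mul]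
      _ = 2 ^ (p - 1) * a n := by
          rw [Finset.sum_ite_eq' (Finset.range p) (vp p n)]
          rw [if_pos (Finset.mem_range.mpr hv), ← ha]
  rw [hmain]
  field_simp
end

section
/- Let p ≥ 2 be an integer, let 0 ≤ i ≤ 2^p - 1, and define E_p(i, n) = d^{(i)}_{p-1-v_p(n)}. Then for all n ≥ 0 and 0 ≤ r < p, E_p(i, pn + r) - E_p(i, n) ≡ E_p(x_r(i), n) (mod 2), where x_r(i) is the degree-p xor-shift of i by r. -/
/-- E_p(i,n) = d^{(i)}_{p-1-v_p(n)}, the binary digit of i in position p-1-v_p(n). -/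
def E (p i n : ℕ) : ℕ := i / 2 ^ (p - 1 - vp p n) % 2

/-- The degree-p xor-shift of i by r: the bitwise XOR of i with the cyclic
rotation (on p bits) of i by r positions (bit k of the rotation is bit
(k-r) mod p of i). -/
def xorShift (p r i : ℕ) : ℕ := i ^^^ ((i * 2 ^ r) % 2 ^ p + i / 2 ^ (p - r))

lemma testBit_div_pow (x r k : ℕ) : (x / 2 ^ r).testBit k = x.testBit (r + k) := by
  rw [← Nat.shiftRight_eq_div_pow, Nat.testBit_shiftRight]

lemma div_pow_mod_two (i k : ℕ) : i / 2 ^ k % 2 = (i.testBit k).toNat := by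
  rw [Nat.testBit_eq_decide_div_mod_eq]
  rcases Nat.mod_two_eq_zero_or_one (i / 2 ^ k) with h | h <;> simp [h]

/-- E_p(i, pn+r) - E_p(i, n) ≡ E_p(x_r(i), n) (mod 2). -/
theorem E_shift_modeq (p : ℕ) (hp : 2 ≤ p) (i : ℕ) (hi : i ≤ 2 ^ p - 1)
    (n r : ℕ) (hr : r < p) :
    (E p i (p * n + r) : ℤ) - (E p i n : ℤ) ≡ (E p (xorShift p r i) n : ℤ) [ZMOD 2] := by
  have hp1 : 1 < p := hp
  have hppos : 0 < p := by omega
  have h2p : 0 < 2 ^ p := Nat.pow_pos (n := p) (by norm_num)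
  have hi' : i < 2 ^ p := by omega
  set v := vp p n with hv
  have hvlt : v < p := Nat.mod_lt _ hppos
  -- digit-sum recursion
  have hvpn : vp p (p * n + r) = (v + r) % p := by
    rcases Nat.eq_zero_or_pos (p * n + r) with h0 | h0
    · have hn : n = 0 := by
        rcases Nat.eq_zero_or_pos n with h | h
        · exact h
        · exfalso; nlinarith
      have hr0 : r = 0 := by omega
      simp [hn, hr0, hv, vp]
    · rw [vp, Nat.digits_def' hp1 h0, Nat.mul_add_mod, Nat.mod_eq_of_lt hr,
        Nat.mul_add_div hppos, Nat.div_eq_of_lt hr, Nat.add_zero]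
      simp only [List.sum_cons]
      rw [hv, vp, Nat.mod_add_mod, Nat.add_comm]
  set k := p - 1 - v with hk
  set k' := p - 1 - (v + r) % p with hk'
  have hA : (i * 2 ^ r) % 2 ^ p = i % 2 ^ (p - r) * 2 ^ r := by
    have h2 : (2 : ℕ) ^ p = 2 ^ (p - r) * 2 ^ r := by
      rw [← pow_add]; congr 1; omega
    rw [h2, Nat.mul_mod_mul_right]
  have hD : i / 2 ^ (p - r) < 2 ^ r := by
    apply Nat.div_lt_of_lt_mul
    have hpr : p - r + r = p := by omega
    rw [← pow_add, hpr]
    exact hi'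
  have hrot : Nat.testBit ((i * 2 ^ r) % 2 ^ p + i / 2 ^ (p - r)) k
      = Nat.testBit i k' := by
    rw [hA]
    by_cases hkr : r ≤ k
    · have h1 : Nat.testBit (i % 2 ^ (p - r) * 2 ^ r + i / 2 ^ (p - r)) k
          = Nat.testBit ((i % 2 ^ (p - r) * 2 ^ r + i / 2 ^ (p - r)) / 2 ^ r) (k - r) := by
        rw [testBit_div_pow]
        congr 1; omega
      rw [h1, Nat.mul_comm (i % 2 ^ (p - r)), Nat.mul_add_div (Nat.pow_pos (by norm_num)),
        Nat.div_eq_of_lt hD, Nat.add_zero, Nat.testBit_mod_two_pow]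
      have hlt : k - r < p - r := by omega
      have hk'eq : k' = k - r := by
        have : (v + r) % p = v + r := Nat.mod_eq_of_lt (by omega)
        omega
      rw [hk'eq]
      simp [hlt]
    · have h1 : Nat.testBit (i % 2 ^ (p - r) * 2 ^ r + i / 2 ^ (p - r)) k
          = Nat.testBit ((i % 2 ^ (p - r) * 2 ^ r + i / 2 ^ (p - r)) % 2 ^ r) k := by
        rw [Nat.testBit_mod_two_pow]
        simp [Nat.lt_of_not_le hkr]
      rw [h1, Nat.mul_comm (i % 2 ^ (p - r)), Nat.mul_add_mod, Nat.mod_eq_of_lt hD,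
        testBit_div_pow]
      congr 1
      have : (v + r) % p = v + r - p := by
        rw [Nat.mod_eq_sub_mod (by omega), Nat.mod_eq_of_lt (by omega)]
      omega
  unfold E
  rw [hvpn, ← hv, ← hk, ← hk', div_pow_mod_two, div_pow_mod_two, div_pow_mod_two,
    xorShift, Nat.testBit_xor, hrot]
  rcases Bool.dichotomy (i.testBit k) with h1 | h1 <;>
    rcases Bool.dichotomy (i.testBit k') with h2 | h2 <;>
      rw [h1, h2] <;> decide
end

section
/- Let p ≥ 2 be an integer. For every i with 0 ≤ i ≤ 2^p - 1, every n ≥ 0, and every r with 0 ≤ r < p, the weight sequences satisfy the recurrence w_i(pn + r) = w_{x_r(i)}(n) · w_i(n), where x_r(i) is the degree-p xor-shift of i by r. -/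
lemma vp_step (p : ℕ) (hp : 2 ≤ p) (n r : ℕ) (hr : r < p) :
    vp p (p * n + r) = (r + vp p n) % p := by
  rcases Nat.eq_zero_or_pos (p * n + r) with h | h
  · have hn : n = 0 := by
      rcases Nat.eq_zero_or_pos n with h' | h'
      · exact h'
      · exfalso; nlinarith [Nat.mul_le_mul_left p h']
    have hr0 : r = 0 := by omega
    simp [hn, hr0, vp]
  · have h1 : (1 : ℕ) < p := by omega
    have hd : Nat.digits p (p * n + r) = r :: Nat.digits p n := by
      rw [Nat.digits_def' h1 h]
      congr 1
      · rw [Nat.mul_comm, Nat.add_comm, Nat.add_mul_mod_self_right,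
          Nat.mod_eq_of_lt hr]
      · congr 1
        rw [Nat.mul_comm p n, Nat.add_comm, Nat.add_mul_div_right _ _ (by omega : 0 < p),
          Nat.div_eq_of_lt hr, Nat.zero_add]
    rw [vp, hd, List.sum_cons, vp, Nat.add_mod_mod]

lemma rot_testBit (p r i k : ℕ) (hr : r < p) (hi : i < 2 ^ p) (hk : k < p) :
    ((i * 2 ^ r) % 2 ^ p + i / 2 ^ (p - r)).testBit k
      = i.testBit ((k + (p - r)) % p) := by
  have hsplit : (2 : ℕ) ^ p = 2 ^ (p - r) * 2 ^ r := by
    rw [← pow_add]; congr 1; omega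
  have h1 : (i * 2 ^ r) % 2 ^ p = 2 ^ r * (i % 2 ^ (p - r)) := by
    rw [hsplit, Nat.mul_mod_mul_right, Nat.mul_comm]
  have hb : i / 2 ^ (p - r) < 2 ^ r := by
    rw [Nat.div_lt_iff_lt_mul (Nat.two_pow_pos _)]
    calc i < 2 ^ p := hi
    _ = 2 ^ r * 2 ^ (p - r) := by rw [← pow_add]; congr 1; omega
  rw [h1, Nat.testBit_two_pow_mul_add _ hb]
  rcases lt_or_ge k r with hkr | hkr
  · rw [if_pos hkr]
    have : (i / 2 ^ (p - r)).testBit k = i.testBit ((p - r) + k) := by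
      rw [← Nat.shiftRight_eq_div_pow, Nat.testBit_shiftRight]
    rw [this]
    congr 1
    have : k + (p - r) < p := by omega
    rw [Nat.mod_eq_of_lt this]; omega
  · rw [if_neg (by omega)]
    have hmod : (k + (p - r)) % p = k - r := by
      have : k + (p - r) = p + (k - r) := by omega
      rw [this, Nat.add_mod_left, Nat.mod_eq_of_lt (by omega)]
    rw [hmod, Nat.testBit_mod_two_pow, decide_eq_true (by omega : k - r < p - r),
      Bool.true_and]

lemma neg_one_pow_xor (a b : Bool) :
    ((-1 : ℝ) ^ (a ^^ b).toNat) = (-1 : ℝ) ^ a.toNat * (-1 : ℝ) ^ b.toNat := by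
  cases a <;> cases b <;> norm_num

/-- XOR-shift recurrence for weight sequences: w_i(pn+r) = w_{x_r(i)}(n) w_i(n). -/
theorem w_recurrence (p : ℕ) (hp : 2 ≤ p) (i : ℕ) (hi : i ≤ 2 ^ p - 1)
    (n r : ℕ) (hr : r < p) :
    w p i (p * n + r) = w p (xorShift p r i) n * w p i n := by
  have hi' : i < 2 ^ p := by
    have := Nat.one_le_two_pow (n := p); omega
  set t := vp p n with ht_def
  have ht : t < p := Nat.mod_lt _ (by omega)
  have hs : vp p (p * n + r) = (r + t) % p := vp_step p hp n r hr
  set s := (r + t) % p with hs_def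
  have hslt : s < p := Nat.mod_lt _ (by omega)
  have hidx : (p - 1 - t + (p - r)) % p = p - 1 - s := by
    rcases lt_or_ge (r + t) p with hc | hc
    · have h1 : s = r + t := Nat.mod_eq_of_lt hc
      have h2 : p - 1 - t + (p - r) = p + (p - 1 - s) := by omega
      rw [h2, Nat.add_mod_left, Nat.mod_eq_of_lt (by omega)]
    · have h1 : s = r + t - p := by
        rw [hs_def, Nat.mod_eq_sub_mod hc, Nat.mod_eq_of_lt (by omega)]
      rw [Nat.mod_eq_of_lt (by omega)]
      omega
  have hbit : ((i * 2 ^ r) % 2 ^ p + i / 2 ^ (p - r)).testBit (p - 1 - t)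
      = i.testBit (p - 1 - s) := by
    rw [rot_testBit p r i _ hr hi' (by omega : p - 1 - t < p), hidx]
  rw [w, w, w, hs, ← ht_def, ← Nat.toNat_testBit, ← Nat.toNat_testBit, ← Nat.toNat_testBit]
  rw [xorShift, Nat.testBit_xor, Bool.xor_comm, neg_one_pow_xor, hbit,
    mul_assoc, ← pow_add]
  rw [Even.neg_one_pow ⟨(i.testBit (p - 1 - t)).toNat, rfl⟩, mul_one]
end
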